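/- Let f : ℝ → ℝ be Lipschitz with compact support contained in [-M, M], and suppose |f(x)| ≤ δ for all x and f is 1-Lipschitz. Then the double integral ∫∫_{ℝ²} ((f(x) - f(y))/(x - y))² dx dy is at most C·(δ + δ·ln(1/δ)) for some constant C depending only on M, for all 0 < δ < 1/2. -/

import Mathlib

open MeasureTheory

open Set in
private lemma kernel_lintegral_le {δ : ℝ} (hδ : 0 < δ) :
    ∫⁻ t : ℝ, ENNReal.ofReal (min 1 (4*δ^2/t^2)) ≤ ENNReal.ofReal (8*δ) := by
  have h2δ : (0:ℝ) < 2*δ := by linarith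
  have hpt : ∀ t : ℝ, ENNReal.ofReal (min 1 (4*δ^2/t^2)) ≤
      (Icc (-(2*δ)) (2*δ)).indicator (fun _ => (1:ENNReal)) t
      + (Iio (-(2*δ)) ∪ Ioi (2*δ)).indicator (fun t => ENNReal.ofReal (4*δ^2/t^2)) t := by
    intro t
    by_cases ht : |t| ≤ 2*δ
    · have hmem : t ∈ Icc (-(2*δ)) (2*δ) := mem_Icc.mpr (abs_le.mp ht)
      rw [indicator_of_mem hmem]
      refine le_add_of_le_of_nonneg ?_ zero_le
      calc ENNReal.ofReal (min 1 (4*δ^2/t^2)) ≤ ENNReal.ofReal 1 :=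
            ENNReal.ofReal_le_ofReal (min_le_left _ _)
        _ = 1 := ENNReal.ofReal_one
    · push_neg at ht
      have h1 : t ∈ Iio (-(2*δ)) ∪ Ioi (2*δ) := by
        rcases lt_abs.mp ht with h | h
        · exact Or.inr h
        · exact Or.inl (by simp only [mem_Iio]; linarith)
      have hnm : t ∉ Icc (-(2*δ)) (2*δ) := fun h =>
        (not_le.mpr ht) (abs_le.mpr (mem_Icc.mp h))
      rw [indicator_of_mem h1, indicator_of_notMem hnm, zero_add]
      exact ENNReal.ofReal_le_ofReal (min_le_right _ _)
  have hIoi : ∫⁻ t in Ioi (2*δ), ENNReal.ofReal (4*δ^2/t^2) = ENNReal.ofReal (2*δ) := by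
    have heqon : ∀ t ∈ Ioi (2*δ), 4*δ^2 * t ^ (-2:ℝ) = 4*δ^2/t^2 := by
      intro t ht
      have ht0 : 0 < t := lt_trans h2δ ht
      rw [show ((-2:ℝ)) = -((2:ℕ):ℝ) by norm_num, Real.rpow_neg ht0.le, Real.rpow_natCast,
        div_eq_mul_inv]
    have hint : IntegrableOn (fun t : ℝ => 4*δ^2/t^2) (Ioi (2*δ)) := by
      have h : IntegrableOn (fun t : ℝ => 4*δ^2 * t ^ (-2:ℝ)) (Ioi (2*δ)) :=
        (integrableOn_Ioi_rpow_of_lt (by norm_num : (-2:ℝ) < -1) h2δ).const_mul (4*δ^2)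
      exact h.congr_fun heqon measurableSet_Ioi
    have hval : ∫ t in Ioi (2*δ), 4*δ^2/t^2 = 2*δ := by
      have heq : ∫ t in Ioi (2*δ), 4*δ^2/t^2 = ∫ t in Ioi (2*δ), 4*δ^2 * t ^ (-2:ℝ) :=
        (setIntegral_congr_fun measurableSet_Ioi heqon).symm
      rw [heq, MeasureTheory.integral_const_mul _ _, integral_Ioi_rpow_of_lt (by norm_num : (-2:ℝ) < -1) h2δ,
        show ((-2:ℝ)+1) = -1 by norm_num, Real.rpow_neg_one]
      field_simp
      ring
    rw [← ofReal_integral_eq_lintegral_ofReal hint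
      (Filter.Eventually.of_forall fun t => by positivity), hval]
  have hIio : ∫⁻ t in Iio (-(2*δ)), ENNReal.ofReal (4*δ^2/t^2)
      = ∫⁻ t in Ioi (2*δ), ENNReal.ofReal (4*δ^2/t^2) := by
    have h := (Measure.measurePreserving_neg (volume : Measure ℝ)).setLIntegral_comp_emb
      (MeasurableEquiv.neg ℝ).measurableEmbedding
      (fun t => ENNReal.ofReal (4*δ^2/t^2)) (Ioi (2*δ))
    simp only [neg_sq] at h
    have himg : (Neg.neg '' Ioi (2*δ) : Set ℝ) = Iio (-(2*δ)) := by
      rw [Set.image_neg_eq_neg, Set.neg_Ioi]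
    rw [himg] at h
    exact h.symm
  calc ∫⁻ t : ℝ, ENNReal.ofReal (min 1 (4*δ^2/t^2))
      ≤ ∫⁻ t : ℝ, ((Icc (-(2*δ)) (2*δ)).indicator (fun _ => (1:ENNReal)) t
        + (Iio (-(2*δ)) ∪ Ioi (2*δ)).indicator (fun t => ENNReal.ofReal (4*δ^2/t^2)) t) :=
        lintegral_mono hpt
    _ = (∫⁻ t : ℝ, (Icc (-(2*δ)) (2*δ)).indicator (fun _ => (1:ENNReal)) t)
        + ∫⁻ t : ℝ, (Iio (-(2*δ)) ∪ Ioi (2*δ)).indicator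
            (fun t => ENNReal.ofReal (4*δ^2/t^2)) t :=
        lintegral_add_left (measurable_const.indicator measurableSet_Icc) _
    _ ≤ ENNReal.ofReal (8*δ) := by
        rw [lintegral_indicator measurableSet_Icc,
          lintegral_indicator (measurableSet_Iio.union measurableSet_Ioi),
          lintegral_union measurableSet_Ioi
            (by rw [Set.disjoint_left]
                intro t h1 h2
                simp only [Set.mem_Iio] at h1
                simp only [Set.mem_Ioi] at h2
                linarith),
          hIio, hIoi, setLIntegral_const, one_mul, Real.volume_Icc,
          ← ENNReal.ofReal_add (by linarith) (by linarith),
          ← ENNReal.ofReal_add (by linarith) (by linarith)]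
        apply ENNReal.ofReal_le_ofReal
        linarith

open Set in
private lemma strip_left (φ : ℝ → ENNReal) (hφ : Measurable φ) (s : Set ℝ)
    (hs : MeasurableSet s) :
    ∫⁻ p : ℝ × ℝ, (s ×ˢ (univ : Set ℝ)).indicator (fun q => φ (q.1 - q.2)) p
      = volume s * ∫⁻ t, φ t := by
  have hm : Measurable fun q : ℝ × ℝ => φ (q.1 - q.2) :=
    hφ.comp (measurable_fst.sub measurable_snd)
  rw [lintegral_indicator (hs.prod MeasurableSet.univ), Measure.volume_eq_prod,
    ← Measure.prod_restrict, Measure.restrict_univ,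
    lintegral_prod _ hm.aemeasurable]
  have h : ∀ x : ℝ, ∫⁻ y, φ (x - y) = ∫⁻ t, φ t := by
    intro x
    have hmp : MeasurePreserving (fun t : ℝ => x - t) volume volume := by
      simp_rw [sub_eq_add_neg]
      exact (measurePreserving_add_left volume x).comp (Measure.measurePreserving_neg volume)
    exact hmp.lintegral_comp hφ
  simp_rw [h]
  rw [setLIntegral_const, mul_comm]

open Set in
private lemma strip_right (φ : ℝ → ENNReal) (hφ : Measurable φ) (s : Set ℝ)
    (hs : MeasurableSet s) :
    ∫⁻ p : ℝ × ℝ, ((univ : Set ℝ) ×ˢ s).indicator (fun q => φ (q.1 - q.2)) p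
      = volume s * ∫⁻ t, φ t := by
  have hm : Measurable fun q : ℝ × ℝ => φ (q.1 - q.2) :=
    hφ.comp (measurable_fst.sub measurable_snd)
  rw [lintegral_indicator (MeasurableSet.univ.prod hs), Measure.volume_eq_prod,
    ← Measure.prod_restrict, Measure.restrict_univ,
    lintegral_prod_symm _ hm.aemeasurable]
  have h : ∀ y : ℝ, ∫⁻ x, φ (x - y) = ∫⁻ t, φ t := fun y =>
    (measurePreserving_sub_right volume y).lintegral_comp hφ
  simp_rw [h]
  rw [setLIntegral_const, mul_comm]

theorem sobolev_half_seminorm_bound (M : ℝ) (hM : 0 < M) :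
    ∃ C > 0, ∀ (f : ℝ → ℝ) (δ : ℝ),
      LipschitzWith 1 f →
      Function.support f ⊆ Set.Icc (-M) M →
      0 < δ → δ < 1/2 →
      (∀ x : ℝ, |f x| ≤ δ) →
      (∫ p : ℝ × ℝ, ((f p.1 - f p.2)/(p.1 - p.2))^2)
        ≤ C * (δ + δ * Real.log (1/δ)) := by
  refine ⟨32*M, by positivity, ?_⟩
  intro f δ hf hsupp hδ hδ2 hbd
  have hδ1 : δ < 1 := by linarith
  have hlog : 0 ≤ Real.log (1/δ) := Real.log_nonneg (one_le_one_div hδ hδ1.le)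
  have hker : ∀ x y : ℝ, ((f x - f y)/(x - y))^2 ≤ min 1 (4*δ^2/(x-y)^2) := by
    intro x y
    rcases eq_or_ne x y with h | h
    · subst h
      simp
    · have ht : x - y ≠ 0 := sub_ne_zero.mpr h
      have ht2 : 0 < (x - y)^2 := by positivity
      rw [div_pow, le_min_iff]
      have hdist := hf.dist_le_mul x y
      simp only [Real.dist_eq, NNReal.coe_one, one_mul] at hdist
      constructor
      · rw [div_le_one ht2]
        calc (f x - f y)^2 = |f x - f y|^2 := (sq_abs _).symm
          _ ≤ |x - y|^2 := by gcongr
          _ = (x - y)^2 := sq_abs _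
      · have h2 : |f x - f y| ≤ 2*δ := by
          have hx := abs_le.mp (hbd x)
          have hy := abs_le.mp (hbd y)
          rw [abs_le]
          constructor <;> linarith
        have h3 : (f x - f y)^2 ≤ 4*δ^2 := by
          nlinarith [sq_abs (f x - f y), abs_nonneg (f x - f y)]
        gcongr
  have main : (∫ p : ℝ × ℝ, ((f p.1 - f p.2)/(p.1 - p.2))^2) ≤ 32*M*δ := by
    have hfm : Measurable f := hf.continuous.measurable
    have hgm : Measurable fun p : ℝ × ℝ => ((f p.1 - f p.2)/(p.1 - p.2))^2 :=
      (((hfm.comp measurable_fst).sub (hfm.comp measurable_snd)).div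
        (measurable_fst.sub measurable_snd)).pow_const 2
    rw [integral_eq_lintegral_of_nonneg_ae (Filter.Eventually.of_forall fun p => sq_nonneg _)
      hgm.aestronglyMeasurable]
    apply ENNReal.toReal_le_of_le_ofReal (by positivity)
    set K : ℝ → ENNReal := fun t => ENNReal.ofReal (min 1 (4*δ^2/t^2)) with hK
    have hKm : Measurable K :=
      ENNReal.measurable_ofReal.comp
        (measurable_const.min (measurable_const.div (measurable_id.pow_const 2)))
    have hH1m : Measurable fun p : ℝ × ℝ =>
        ((Set.Icc (-M) M) ×ˢ (Set.univ : Set ℝ)).indicator (fun q => K (q.1 - q.2)) p :=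
      (hKm.comp (measurable_fst.sub measurable_snd)).indicator
        (measurableSet_Icc.prod MeasurableSet.univ)
    calc ∫⁻ p : ℝ × ℝ, ENNReal.ofReal (((f p.1 - f p.2)/(p.1 - p.2))^2)
        ≤ ∫⁻ p : ℝ × ℝ, (((Set.Icc (-M) M) ×ˢ (Set.univ : Set ℝ)).indicator
              (fun q => K (q.1 - q.2)) p
            + ((Set.univ : Set ℝ) ×ˢ (Set.Icc (-M) M)).indicator (fun q => K (q.1 - q.2)) p) := by
          apply lintegral_mono
          rintro ⟨x, y⟩
          dsimp only
          have hxy : ENNReal.ofReal (((f x - f y)/(x - y))^2) ≤ K (x - y) :=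
            ENNReal.ofReal_le_ofReal (hker x y)
          by_cases hx : x ∈ Set.Icc (-M) M
          · rw [Set.indicator_of_mem (Set.mem_prod.mpr ⟨hx, Set.mem_univ y⟩)]
            exact hxy.trans le_self_add
          · by_cases hy : y ∈ Set.Icc (-M) M
            · rw [Set.indicator_of_mem (show (x, y) ∈ (Set.univ : Set ℝ) ×ˢ Set.Icc (-M) M from Set.mem_prod.mpr ⟨Set.mem_univ x, hy⟩)]
              exact hxy.trans le_add_self
            · have hfx : f x = 0 := by
                by_contra hc; exact hx (hsupp (Function.mem_support.mpr hc))
              have hfy : f y = 0 := by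
                by_contra hc; exact hy (hsupp (Function.mem_support.mpr hc))
              simp [hfx, hfy]
      _ = (∫⁻ p : ℝ × ℝ, ((Set.Icc (-M) M) ×ˢ (Set.univ : Set ℝ)).indicator
              (fun q => K (q.1 - q.2)) p)
          + ∫⁻ p : ℝ × ℝ, ((Set.univ : Set ℝ) ×ˢ (Set.Icc (-M) M)).indicator
              (fun q => K (q.1 - q.2)) p := lintegral_add_left hH1m _
      _ = volume (Set.Icc (-M) M) * (∫⁻ t, K t)
          + volume (Set.Icc (-M) M) * ∫⁻ t, K t := by
          rw [strip_left K hKm _ measurableSet_Icc, strip_right K hKm _ measurableSet_Icc]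
      _ ≤ ENNReal.ofReal (2*M) * ENNReal.ofReal (8*δ)
          + ENNReal.ofReal (2*M) * ENNReal.ofReal (8*δ) := by
          have hvol : volume (Set.Icc (-M) M) = ENNReal.ofReal (2*M) := by
            rw [Real.volume_Icc]
            congr 1
            ring
          rw [hvol]
          have hker' := kernel_lintegral_le hδ
          gcongr
      _ = ENNReal.ofReal (32*M*δ) := by
          rw [← ENNReal.ofReal_mul (by linarith : (0:ℝ) ≤ 2*M),
            ← ENNReal.ofReal_add (by positivity) (by positivity)]
          congr 1
          ring
  refine main.trans ?_
  nlinarith [mul_nonneg (mul_nonneg (by linarith : (0:ℝ) ≤ 32*M) hδ.le) hlog]
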